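/- (Exponentiated-gradient regret bound for the dual player, used in the proof of Theorem 1.) Let Z and T be positive integers, B > 0, η > 0, ρ ≥ 0, and let r^1, …, r^T ∈ ℝ^Z satisfy |r^t_j| ≤ ρ for all t and j. Define θ^1 = 0 ∈ ℝ^Z, θ^{t+1}_j = θ^t_j + η r^t_j, and λ^t_j = B · exp(θ^t_j) / (1 + ∑_{j'=1}^Z exp(θ^t_{j'})). Then λ^t ∈ Λ_B for every t, and for every λ ∈ Λ_B, ∑_{t=1}^T ∑_{j=1}^Z λ_j r^t_j ≤ ∑_{t=1}^T ∑_{j=1}^Z λ^t_j r^t_j + B log(Z + 1)/η + η ρ² B T. -/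

import Mathlib

open Real Finset

lemma aux_sinh_le_mul_cosh {x : ℝ} (hx : 0 ≤ x) : Real.sinh x ≤ x * Real.cosh x := by
  have hmono : MonotoneOn (fun y => y * Real.cosh y - Real.sinh y) (Set.Ici 0) := by
    apply monotoneOn_of_deriv_nonneg (convex_Ici 0)
    · fun_prop
    · intro y hy
      exact (((hasDerivAt_id y).mul (Real.hasDerivAt_cosh y)).sub
        (Real.hasDerivAt_sinh y)).differentiableAt.differentiableWithinAt
    · intro y hy
      rw [interior_Ici] at hy
      have hd : HasDerivAt (fun y => y * Real.cosh y - Real.sinh y)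
          (1 * Real.cosh y + y * Real.sinh y - Real.cosh y) y :=
        ((hasDerivAt_id y).mul (Real.hasDerivAt_cosh y)).sub (Real.hasDerivAt_sinh y)
      rw [hd.deriv]
      have : 0 ≤ Real.sinh y := Real.sinh_nonneg_iff.mpr (le_of_lt hy)
      nlinarith [Set.mem_Ioi.mp hy]
  have := hmono (Set.self_mem_Ici) (Set.mem_Ici.mpr hx) hx
  simpa using this

lemma aux_log_cosh {x : ℝ} (hx : 0 ≤ x) :
    Real.log (Real.cosh x) + x - Real.sinh x / Real.cosh x ≤ x ^ 2 := by
  set F : ℝ → ℝ := fun y => y ^ 2 - y - Real.log (Real.cosh y) + Real.sinh y / Real.cosh y with hF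
  have hder : ∀ y : ℝ, HasDerivAt F
      (2 * y - 1 - Real.sinh y / Real.cosh y +
        (Real.cosh y * Real.cosh y - Real.sinh y * Real.sinh y) / (Real.cosh y) ^ 2) y := by
    intro y
    have hc := Real.cosh_pos y
    have h1 : HasDerivAt (fun y : ℝ => y ^ 2) (2 * y) y := by
      simpa using hasDerivAt_pow 2 y
    have h2 : HasDerivAt (fun y => Real.log (Real.cosh y)) (Real.sinh y / Real.cosh y) y :=
      (Real.hasDerivAt_cosh y).log hc.ne'
    have h3 : HasDerivAt (fun y => Real.sinh y / Real.cosh y)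
        ((Real.cosh y * Real.cosh y - Real.sinh y * Real.sinh y) / (Real.cosh y) ^ 2) y :=
      (Real.hasDerivAt_sinh y).div (Real.hasDerivAt_cosh y) hc.ne'
    exact ((h1.sub (hasDerivAt_id y)).sub h2).add h3 |>.congr_deriv (by ring)
  have hmono : MonotoneOn F (Set.Ici 0) := by
    apply monotoneOn_of_deriv_nonneg (convex_Ici 0)
    · exact fun y _ => (hder y).continuousAt.continuousWithinAt
    · exact fun y _ => (hder y).differentiableAt.differentiableWithinAt
    · intro y hy
      rw [interior_Ici] at hy
      rw [(hder y).deriv]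
      have hc := Real.cosh_pos y
      have hs : 0 ≤ Real.sinh y := Real.sinh_nonneg_iff.mpr hy.le
      have hsc : Real.sinh y < Real.cosh y := Real.sinh_lt_cosh y
      have hsx : Real.sinh y ≤ y * Real.cosh y := aux_sinh_le_mul_cosh hy.le
      set c := Real.cosh y
      set s := Real.sinh y
      have hcc : (c * c - s * s) / c ^ 2 = 1 - (s / c) ^ 2 := by
        field_simp
      rw [hcc]
      have ht0 : 0 ≤ s / c := div_nonneg hs hc.le
      have ht1 : s / c ≤ 1 := by rw [div_le_one hc]; exact hsc.le
      have hty : s / c ≤ y := by rw [div_le_iff₀ hc]; exact hsx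
      nlinarith [ht0, ht1, hty]
  have h0 : F 0 ≤ F x := hmono Set.self_mem_Ici (Set.mem_Ici.mpr hx) hx
  have : F 0 = 0 := by simp [hF]
  rw [this] at h0
  simp only [hF] at h0
  linarith

lemma aux_log_bound {x u : ℝ} (hx : 0 ≤ x) (hu : |u| ≤ 1) :
    Real.log (Real.cosh x + u * Real.sinh x) ≤ u * x + x ^ 2 := by
  have hc := Real.cosh_pos x
  have hs : 0 ≤ Real.sinh x := Real.sinh_nonneg_iff.mpr hx
  have hsc : Real.sinh x < Real.cosh x := Real.sinh_lt_cosh x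
  have hu1 : -1 ≤ u := neg_le_of_abs_le hu
  have hu2 : u ≤ 1 := le_of_abs_le hu
  have hsx : Real.sinh x ≤ x * Real.cosh x := aux_sinh_le_mul_cosh hx
  set t := Real.sinh x / Real.cosh x with ht
  have ht0 : 0 ≤ t := div_nonneg hs hc.le
  have ht1 : t < 1 := by rw [ht, div_lt_one hc]; exact hsc
  have hty : t ≤ x := by rw [ht, div_le_iff₀ hc]; exact hsx
  have hpos : 0 < 1 + u * t := by nlinarith
  have hfac : Real.cosh x + u * Real.sinh x = Real.cosh x * (1 + u * t) := by
    rw [ht]; field_simp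
  rw [hfac, Real.log_mul hc.ne' hpos.ne']
  have h2 : Real.log (1 + u * t) ≤ u * t := by
    have := Real.add_one_le_exp (u * t)
    have := Real.log_le_sub_one_of_pos hpos
    linarith
  have h3 : Real.log (Real.cosh x) + x - t ≤ x ^ 2 := aux_log_cosh hx
  nlinarith [h2, h3]

lemma aux_chord {η ρ y : ℝ} (hη : 0 < η) (hρ : 0 < ρ) (hy : |y| ≤ ρ) :
    Real.exp (η * y) ≤ Real.cosh (η * ρ) + (y / ρ) * Real.sinh (η * ρ) := by
  have hy1 : -ρ ≤ y := neg_le_of_abs_le hy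
  have hy2 : y ≤ ρ := le_of_abs_le hy
  have ha : (0:ℝ) ≤ (ρ - y) / (2 * ρ) := div_nonneg (by linarith) (by linarith)
  have hb : (0:ℝ) ≤ (ρ + y) / (2 * ρ) := div_nonneg (by linarith) (by linarith)
  have hab : (ρ - y) / (2 * ρ) + (ρ + y) / (2 * ρ) = 1 := by field_simp; ring
  have h := convexOn_exp.2 (Set.mem_univ (-(η * ρ))) (Set.mem_univ (η * ρ)) ha hb hab
  simp only [smul_eq_mul] at h
  have hpt : (ρ - y) / (2 * ρ) * -(η * ρ) + (ρ + y) / (2 * ρ) * (η * ρ) = η * y := by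
    field_simp; ring
  rw [hpt] at h
  refine h.trans (le_of_eq ?_)
  rw [Real.cosh_eq, Real.sinh_eq]
  field_simp
  ring

/-- Exponentiated-gradient (Hedge) regret bound for the dual player, used in
the proof of Theorem 1. The rounds are indexed `t = 0, …, T-1` (so `θ 0 = 0`
corresponds to `θ^1 = 0` in the paper). The iterates
`λ^t_j = B exp(θ^t_j)/(1 + ∑_{j'} exp(θ^t_{j'}))` lie in `Λ_B`, and for every
`λ ∈ Λ_B`,
`∑_t ⟨λ, r^t⟩ ≤ ∑_t ⟨λ^t, r^t⟩ + B log(Z+1)/η + η ρ² B T`. -/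
theorem stmt_5 {Z T : ℕ} (hZ : 0 < Z) (hT : 0 < T)
    {B η ρ : ℝ} (hB : 0 < B) (hη : 0 < η) (hρ : 0 ≤ ρ)
    (r : ℕ → Fin Z → ℝ) (hr : ∀ t < T, ∀ j, |r t j| ≤ ρ)
    (θ : ℕ → Fin Z → ℝ)
    (hθ0 : ∀ j, θ 0 j = 0)
    (hθ : ∀ t j, θ (t + 1) j = θ t j + η * r t j)
    (lam : ℕ → Fin Z → ℝ)
    (hlam : ∀ t j, lam t j =
      B * Real.exp (θ t j) / (1 + ∑ j', Real.exp (θ t j'))) :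
    (∀ t, (∀ j, 0 ≤ lam t j) ∧ ∑ j, lam t j ≤ B) ∧
    ∀ lam' : Fin Z → ℝ, (∀ j, 0 ≤ lam' j) → (∑ j, lam' j ≤ B) →
      ∑ t ∈ Finset.range T, ∑ j, lam' j * r t j ≤
        (∑ t ∈ Finset.range T, ∑ j, lam t j * r t j) +
          B * Real.log (Z + 1) / η + η * ρ ^ 2 * B * T := by
  set S : ℕ → ℝ := fun t => 1 + ∑ j, Real.exp (θ t j) with hS
  have hS1 : ∀ t, 1 ≤ S t := by
    intro t
    have : (0:ℝ) ≤ ∑ j, Real.exp (θ t j) :=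
      Finset.sum_nonneg fun j _ => (Real.exp_pos _).le
    simp only [hS]; linarith
  have hSpos : ∀ t, 0 < S t := fun t => lt_of_lt_of_le one_pos (hS1 t)
  set rb : ℕ → ℝ := fun t => (∑ j, Real.exp (θ t j) * r t j) / S t with hrb
  -- each term exp(θ t j) ≤ S t
  have hexp_le : ∀ t j, Real.exp (θ t j) ≤ S t := by
    intro t j
    have : Real.exp (θ t j) ≤ ∑ j', Real.exp (θ t j') :=
      Finset.single_le_sum (fun j' _ => (Real.exp_pos (θ t j')).le) (Finset.mem_univ j)
    simp only [hS]; linarith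
  -- Part 1
  have part1 : ∀ t, (∀ j, 0 ≤ lam t j) ∧ ∑ j, lam t j ≤ B := by
    intro t
    constructor
    · intro j
      rw [hlam]
      have := hSpos t
      simp only [hS] at this
      positivity
    · have hsum : ∑ j, lam t j = (∑ j, Real.exp (θ t j)) * (B / S t) := by
        rw [Finset.sum_mul]
        refine Finset.sum_congr rfl fun j _ => ?_
        rw [hlam]
        simp only [hS]
        ring
      rw [hsum]
      have h1 : (∑ j, Real.exp (θ t j)) * (B / S t) ≤ S t * (B / S t) := by
        have : ∑ j, Real.exp (θ t j) ≤ S t := by simp only [hS]; linarith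
        exact mul_le_mul_of_nonneg_right this (by positivity)
      have h2 : S t * (B / S t) = B := by have := (hSpos t).ne'; field_simp
      linarith [h1, h2.le]
  refine ⟨part1, ?_⟩
  intro lam' hl0 hlB
  -- lam in terms of rb
  have hlam_rb : ∀ t, ∑ j, lam t j * r t j = B * rb t := by
    intro t
    simp only [hrb]
    rw [Finset.sum_div, Finset.mul_sum]
    refine Finset.sum_congr rfl fun j _ => ?_
    rw [hlam]
    simp only [hS]
    field_simp
  -- key one-step bound
  have step : ∀ t, t < T →
      Real.log (S (t + 1)) ≤ Real.log (S t) + η * rb t + η ^ 2 * ρ ^ 2 := by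
    intro t htT
    rcases eq_or_lt_of_le hρ with hρ0 | hρpos
    · -- ρ = 0 : all rewards are zero
      have hr0 : ∀ j, r t j = 0 := by
        intro j
        have := hr t htT j
        rw [← hρ0] at this
        exact abs_nonpos_iff.mp this
      have hθeq : ∀ j, θ (t + 1) j = θ t j := by
        intro j; rw [hθ, hr0]; ring
      have hSeq : S (t + 1) = S t := by
        simp only [hS]
        congr 1
        exact Finset.sum_congr rfl fun j _ => by rw [hθeq]
      have hrb0 : rb t = 0 := by
        simp only [hrb]
        rw [Finset.sum_eq_zero fun j _ => by rw [hr0 j]; ring]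
        simp
      rw [hSeq, hrb0]
      nlinarith [sq_nonneg η, sq_nonneg ρ]
    · -- ρ > 0
      have hub : |rb t| ≤ ρ := by
        rw [hrb, abs_div, abs_of_pos (hSpos t), div_le_iff₀ (hSpos t)]
        calc |∑ j, Real.exp (θ t j) * r t j| ≤ ∑ j, |Real.exp (θ t j) * r t j| :=
              Finset.abs_sum_le_sum_abs _ _
          _ ≤ ∑ j, Real.exp (θ t j) * ρ := by
              refine Finset.sum_le_sum fun j _ => ?_
              rw [abs_mul, abs_of_pos (Real.exp_pos _)]
              exact mul_le_mul_of_nonneg_left (hr t htT j) (Real.exp_pos _).le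
          _ = (∑ j, Real.exp (θ t j)) * ρ := by rw [← Finset.sum_mul]
          _ ≤ S t * ρ := by
              have : ∑ j, Real.exp (θ t j) ≤ S t := by simp only [hS]; linarith
              exact mul_le_mul_of_nonneg_right this hρ
          _ = ρ * S t := by ring
      have hu : |rb t / ρ| ≤ 1 := by
        rw [abs_div, abs_of_pos hρpos, div_le_one hρpos]
        exact hub
      have hA : (0:ℝ) < Real.cosh (η * ρ) + (rb t / ρ) * Real.sinh (η * ρ) := by
        have hs : 0 ≤ Real.sinh (η * ρ) := Real.sinh_nonneg_iff.mpr (by positivity)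
        have hsc : Real.sinh (η * ρ) < Real.cosh (η * ρ) := Real.sinh_lt_cosh _
        have h1 : -1 ≤ rb t / ρ := neg_le_of_abs_le hu
        nlinarith
      have hkey : S (t + 1) ≤ S t * (Real.cosh (η * ρ) + (rb t / ρ) * Real.sinh (η * ρ)) := by
        have hterm : ∀ j, Real.exp (θ (t + 1) j) ≤
            Real.exp (θ t j) * (Real.cosh (η * ρ) + (r t j / ρ) * Real.sinh (η * ρ)) := by
          intro j
          rw [hθ, Real.exp_add]
          exact mul_le_mul_of_nonneg_left (aux_chord hη hρpos (hr t htT j)) (Real.exp_pos _).le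
        have hsum : ∑ j, Real.exp (θ (t + 1) j) ≤
            (∑ j, Real.exp (θ t j)) * Real.cosh (η * ρ) +
              (∑ j, Real.exp (θ t j) * r t j) * (Real.sinh (η * ρ) / ρ) := by
          calc ∑ j, Real.exp (θ (t + 1) j)
              ≤ ∑ j, Real.exp (θ t j) * (Real.cosh (η * ρ) + (r t j / ρ) * Real.sinh (η * ρ)) :=
                Finset.sum_le_sum fun j _ => hterm j
            _ = (∑ j, Real.exp (θ t j)) * Real.cosh (η * ρ) +
                  (∑ j, Real.exp (θ t j) * r t j) * (Real.sinh (η * ρ) / ρ) := by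
                rw [Finset.sum_mul, Finset.sum_mul, ← Finset.sum_add_distrib]
                refine Finset.sum_congr rfl fun j _ => ?_
                field_simp
        have hone : (1:ℝ) ≤ Real.cosh (η * ρ) := Real.one_le_cosh _
        have hrbS : (∑ j, Real.exp (θ t j) * r t j) = rb t * S t := by
          have := (hSpos t).ne'; rw [hrb]; field_simp
        simp only [hS] at hsum ⊢
        rw [hrbS] at hsum
        have hs : 0 ≤ Real.sinh (η * ρ) := Real.sinh_nonneg_iff.mpr (by positivity)
        have hexpand : rb t * S t * (Real.sinh (η * ρ) / ρ)
            = S t * ((rb t / ρ) * Real.sinh (η * ρ)) := by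
          field_simp
        simp only [hS] at hexpand hSpos hS1
        nlinarith [hsum, hone, hS1 t]
      calc Real.log (S (t + 1))
          ≤ Real.log (S t * (Real.cosh (η * ρ) + (rb t / ρ) * Real.sinh (η * ρ))) :=
            Real.log_le_log (hSpos (t + 1)) hkey
        _ = Real.log (S t) + Real.log (Real.cosh (η * ρ) + (rb t / ρ) * Real.sinh (η * ρ)) :=
            Real.log_mul (hSpos t).ne' hA.ne'
        _ ≤ Real.log (S t) + ((rb t / ρ) * (η * ρ) + (η * ρ) ^ 2) := by
            have := aux_log_bound (x := η * ρ) (u := rb t / ρ) (by positivity) hu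
            linarith
        _ = Real.log (S t) + η * rb t + η ^ 2 * ρ ^ 2 := by
            field_simp
            ring
  -- telescoping
  have tel : ∀ n, n ≤ T →
      Real.log (S n) ≤ Real.log (S 0) + η * ∑ t ∈ Finset.range n, rb t
        + n * (η ^ 2 * ρ ^ 2) := by
    intro n
    induction n with
    | zero => intro _; simp
    | succ k ih =>
        intro hk
        have hk' : k < T := hk
        have h1 := ih (le_of_lt hk')
        have h2 := step k hk'
        rw [Finset.sum_range_succ]
        push_cast
        linarith
  -- θ T as sum of rewards
  have hθT : ∀ j, θ T j = η * ∑ t ∈ Finset.range T, r t j := by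
    intro j
    have : ∀ n, θ n j = η * ∑ t ∈ Finset.range n, r t j := by
      intro n
      induction n with
      | zero => simp [hθ0]
      | succ k ih => rw [hθ, ih, Finset.sum_range_succ]; ring
    exact this T
  -- comparator bound
  have hlogT0 : 0 ≤ Real.log (S T) := Real.log_nonneg (hS1 T)
  have hθle : ∀ j, θ T j ≤ Real.log (S T) := by
    intro j
    rw [← Real.log_exp (θ T j)]
    exact Real.log_le_log (Real.exp_pos _) (hexp_le T j)
  have hcomp : ∑ t ∈ Finset.range T, ∑ j, lam' j * r t j ≤ B * Real.log (S T) / η := by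
    have hswap : ∑ t ∈ Finset.range T, ∑ j, lam' j * r t j
        = ∑ j, lam' j * (∑ t ∈ Finset.range T, r t j) := by
      rw [Finset.sum_comm]
      exact Finset.sum_congr rfl fun j _ => by rw [Finset.mul_sum]
    rw [hswap]
    have h1 : ∑ j, lam' j * (∑ t ∈ Finset.range T, r t j)
        = (∑ j, lam' j * θ T j) / η := by
      rw [Finset.sum_div]
      refine Finset.sum_congr rfl fun j _ => ?_
      rw [hθT j]
      field_simp
      try ring
    rw [h1, div_le_div_iff₀ hη hη]
    have h2 : ∑ j, lam' j * θ T j ≤ ∑ j, lam' j * Real.log (S T) :=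
      Finset.sum_le_sum fun j _ => mul_le_mul_of_nonneg_left (hθle j) (hl0 j)
    have h3 : ∑ j, lam' j * Real.log (S T) = (∑ j, lam' j) * Real.log (S T) := by
      rw [Finset.sum_mul]
    have h4 : (∑ j, lam' j) * Real.log (S T) ≤ B * Real.log (S T) :=
      mul_le_mul_of_nonneg_right hlB hlogT0
    nlinarith [h2, h4, hη.le]
  -- log S 0 = log (Z + 1)
  have hS0 : S 0 = (Z : ℝ) + 1 := by
    simp only [hS]
    simp [hθ0]
    ring
  -- combine
  have hfin : Real.log (S T) ≤ Real.log ((Z : ℝ) + 1) + η * ∑ t ∈ Finset.range T, rb t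
      + T * (η ^ 2 * ρ ^ 2) := by
    have := tel T le_rfl
    rw [hS0] at this
    exact this
  have hsum_eq : ∑ t ∈ Finset.range T, ∑ j, lam t j * r t j
      = B * ∑ t ∈ Finset.range T, rb t := by
    rw [Finset.mul_sum]
    exact Finset.sum_congr rfl fun t _ => hlam_rb t
  calc ∑ t ∈ Finset.range T, ∑ j, lam' j * r t j
      ≤ B * Real.log (S T) / η := hcomp
    _ ≤ B * (Real.log ((Z:ℝ) + 1) + η * ∑ t ∈ Finset.range T, rb t
          + T * (η ^ 2 * ρ ^ 2)) / η := by
        gcongr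
    _ = (∑ t ∈ Finset.range T, ∑ j, lam t j * r t j) +
          B * Real.log (Z + 1) / η + η * ρ ^ 2 * B * T := by
        rw [hsum_eq]
        field_simp
        ring
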